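/- Let k be a field of characteristic p > 0 and consider the Weyl algebra (ring of differential operators) on k[x]. For any integer a ≥ 1, the two-sided ideal generated by x^a equals the two-sided ideal generated by x. -/

import Mathlib

open Finset in
private lemma stmt13_aux {A : Type*} [Ring A] (x : A) (D : ℕ → A) (hD0 : D 0 = 1)
    (hDX : ∀ b, D (b + 1) * x - x * D (b + 1) = D b) :
    ∀ n m, n ≤ m → D m * x ^ n =
      ∑ j ∈ Finset.range (n + 1), (n.choose j) • (x ^ (n - j) * D (m - j)) := by
  intro n
  induction n with
  | zero => intro m _; simp
  | succ n ih =>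
    intro m hm
    have hnm : n ≤ m := by omega
    have hDx : ∀ j ∈ Finset.range (n + 1),
        (n.choose j) • (x ^ (n - j) * (D (m - j) * x)) =
        (n.choose j) • (x ^ (n + 1 - j) * D (m - j))
          + (n.choose j) • (x ^ (n - j) * D (m - j - 1)) := by
      intro j hj
      have hj' : j ≤ n := Finset.mem_range_succ_iff.mp hj
      have h1 : m - j = (m - j - 1) + 1 := by omega
      have h2 := hDX (m - j - 1)
      rw [← h1] at h2
      have h3 : D (m - j) * x = x * D (m - j) + D (m - j - 1) := by
        rw [← h2]; abel
      have h4 : x ^ (n + 1 - j) = x ^ (n - j) * x := by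
        rw [← pow_succ]; congr 1; omega
      rw [h3, h4, mul_add, smul_add, mul_assoc]
    have step : D m * x ^ (n + 1)
        = ∑ j ∈ Finset.range (n + 1), (n.choose j) • (x ^ (n - j) * (D (m - j) * x)) := by
      rw [pow_succ, ← mul_assoc, ih m hnm, Finset.sum_mul]
      exact Finset.sum_congr rfl fun j _ => by rw [smul_mul_assoc, mul_assoc]
    rw [step, Finset.sum_congr rfl hDx, Finset.sum_add_distrib]
    -- RHS manipulation
    have hRHS : ∑ j ∈ Finset.range (n + 2), ((n + 1).choose j) • (x ^ (n + 1 - j) * D (m - j))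
        = (∑ i ∈ Finset.range (n + 1), ((n + 1).choose (i + 1)) • (x ^ (n - i) * D (m - i - 1)))
          + x ^ (n + 1) * D m := by
      rw [Finset.sum_range_succ']
      congr 1
      · exact Finset.sum_congr rfl fun i _ => by
          have e1 : n + 1 - (i + 1) = n - i := by omega
          have e2 : m - (i + 1) = m - i - 1 := by omega
          rw [e1, e2]
      · simp
    rw [hRHS]
    have hS1 : ∑ j ∈ Finset.range (n + 1), (n.choose j) • (x ^ (n + 1 - j) * D (m - j))
        = (∑ i ∈ Finset.range n, (n.choose (i + 1)) • (x ^ (n - i) * D (m - i - 1)))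
          + x ^ (n + 1) * D m := by
      rw [Finset.sum_range_succ']
      congr 1
      · exact Finset.sum_congr rfl fun i _ => by
          have e1 : n + 1 - (i + 1) = n - i := by omega
          have e2 : m - (i + 1) = m - i - 1 := by omega
          have e3 : n.choose (i + 1) = n.choose (i + 1) := rfl
          rw [e1, e2]
      · simp
    rw [hS1]
    have hpascal : ∀ i ∈ Finset.range (n + 1),
        ((n + 1).choose (i + 1)) • (x ^ (n - i) * D (m - i - 1))
        = (n.choose i) • (x ^ (n - i) * D (m - i - 1))
          + (n.choose (i + 1)) • (x ^ (n - i) * D (m - i - 1)) := by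
      intro i _
      rw [Nat.choose_succ_succ, add_smul]
    rw [Finset.sum_congr rfl hpascal, Finset.sum_add_distrib]
    have hlast : ∑ i ∈ Finset.range (n + 1), (n.choose (i + 1)) • (x ^ (n - i) * D (m - i - 1))
        = ∑ i ∈ Finset.range n, (n.choose (i + 1)) • (x ^ (n - i) * D (m - i - 1)) := by
      rw [Finset.sum_range_succ, Nat.choose_succ_self, zero_smul, add_zero]
    rw [hlast]
    abel

/-- In the ring of differential operators on `k[x]` for `k` a field of characteristic `p > 0`
(any `k`-algebra with an element `x` and divided power operators `D m` satisfying the defining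
relations), for any `a ≥ 1` the two-sided ideal generated by `x^a` equals the two-sided ideal
generated by `x`. -/
theorem stmt13 {k A : Type*} [Field k] (p : ℕ) [Fact p.Prime] [CharP k p]
    [Ring A] [Algebra k A] (x : A) (D : ℕ → A)
    (hD0 : D 0 = 1)
    (hDmul : ∀ a b, D a * D b = Nat.choose (a + b) a • D (a + b))
    (hDX : ∀ b, D (b + 1) * x - x * D (b + 1) = D b)
    (a : ℕ) (ha : 1 ≤ a) :
    TwoSidedIdeal.span ({x ^ a} : Set A) = TwoSidedIdeal.span ({x} : Set A) := by
  have hp : p.Prime := Fact.out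
  have hp2 : 2 ≤ p := hp.two_le
  -- choose q = p ^ a ≥ a
  set q := p ^ a with hq
  have hqa : a ≤ q := le_of_lt (Nat.lt_pow_self (n := a) hp2)
  have hq1 : 1 ≤ q := by omega
  have hpA : (p : A) = 0 := by
    rw [← map_natCast (algebraMap k A) p, CharP.cast_eq_zero, map_zero]
  -- the key identity D q * x ^ q = x ^ q * D q + 1
  have hkey : D q * x ^ q = x ^ q * D q + 1 := by
    have h := stmt13_aux x D hD0 hDX q q le_rfl
    rw [h]
    have hmid : ∀ j ∈ Finset.range (q + 1), j ≠ 0 → j ≠ q →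
        (q.choose j) • (x ^ (q - j) * D (q - j)) = 0 := by
      intro j _ hj0 hjq
      have hdvd : p ∣ q.choose j := hp.dvd_choose_pow hj0 hjq
      obtain ⟨t, ht⟩ := hdvd
      rw [ht, mul_smul, nsmul_eq_mul, hpA, zero_mul]
    -- sum reduces to j = 0 and j = q terms
    have hsplit : ∑ j ∈ Finset.range (q + 1), (q.choose j) • (x ^ (q - j) * D (q - j))
        = (q.choose 0) • (x ^ (q - 0) * D (q - 0)) + (q.choose q) • (x ^ (q - q) * D (q - q)) := by
      rw [← Finset.add_sum_erase _ _ (Finset.mem_range.mpr (by omega) : 0 ∈ Finset.range (q+1))]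
      congr 1
      rw [← Finset.add_sum_erase _ _
        (Finset.mem_erase.mpr ⟨by omega, Finset.mem_range.mpr (by omega)⟩ :
          q ∈ (Finset.range (q+1)).erase 0)]
      rw [Finset.sum_eq_zero, add_zero]
      intro j hj
      simp only [Finset.mem_erase, Finset.mem_range] at hj
      exact hmid j (Finset.mem_range.mpr hj.2.2) hj.2.1 hj.1
    rw [hsplit]
    simp [hD0]
  -- x ∈ span {x ^ q}
  have hxq_mem : x ^ q ∈ TwoSidedIdeal.span ({x ^ a} : Set A) := by
    have : x ^ q = x ^ (q - a) * x ^ a := by rw [← pow_add]; congr 1; omega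
    rw [this]
    exact TwoSidedIdeal.mul_mem_left _ _ _ (TwoSidedIdeal.subset_span rfl)
  have hx_mem : x ∈ TwoSidedIdeal.span ({x ^ a} : Set A) := by
    have hx : x = x * D q * x ^ q - x * x ^ q * D q := by
      have h5 : x * (D q * x ^ q) = x * (x ^ q * D q + 1) := by rw [hkey]
      rw [mul_add, mul_one] at h5
      rw [← mul_assoc, ← mul_assoc] at h5
      rw [h5]; abel
    have hmem : x * D q * x ^ q - x * x ^ q * D q ∈ TwoSidedIdeal.span ({x ^ a} : Set A) :=
      sub_mem (TwoSidedIdeal.mul_mem_left _ _ _ hxq_mem)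
        (TwoSidedIdeal.mul_mem_right _ _ _
          (TwoSidedIdeal.mul_mem_left _ _ _ hxq_mem))
    rwa [← hx] at hmem
  apply le_antisymm
  · intro y hy
    rw [TwoSidedIdeal.mem_span_iff] at hy
    apply hy
    intro z hz
    rw [Set.mem_singleton_iff] at hz
    subst hz
    have : x ^ a = x ^ (a - 1) * x := by rw [← pow_succ]; congr 1; omega
    rw [SetLike.mem_coe, this]
    exact TwoSidedIdeal.mul_mem_left _ _ _ (TwoSidedIdeal.subset_span rfl)
  · intro y hy
    rw [TwoSidedIdeal.mem_span_iff] at hy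
    apply hy
    intro z hz
    rw [Set.mem_singleton_iff] at hz
    subst hz
    exact hx_mem
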